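/- For any P₁, P₂ > 0 and any c with 0 < c < 1, the set of pairs (R₁, R₂) ∈ ℝ² with R₁ ≥ 0, R₂ ≥ 0 such that (R₁, max{(1/c)·R₂ − (1/c − 1)·γ(P₂), 0}) ∈ C₁ is equal to the set {(R₁, R₂) ∈ ℝ² : 0 ≤ R₁ ≤ γ(P₁), 0 ≤ R₂ ≤ γ(P₂), R₁ + (1/c)·R₂ ≤ (1/c − 1)·γ(P₂) + γ(P₁+P₂)}. -/

import Mathlib

/-- γ(x) = (1/2)·log₂(1+x). -/
noncomputable def gam (x : ℝ) : ℝ := (1/2) * Real.logb 2 (1 + x)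

/-- The standard two-user Gaussian MAC capacity region. -/
def C1 (P₁ P₂ : ℝ) : Set (ℝ × ℝ) :=
  {r : ℝ × ℝ | 0 ≤ r.1 ∧ r.1 ≤ gam P₁ ∧ 0 ≤ r.2 ∧ r.2 ≤ gam P₂ ∧
    r.1 + r.2 ≤ gam (P₁ + P₂)}

theorem stmt_0 (P₁ P₂ c : ℝ) (hP₁ : 0 < P₁) (hP₂ : 0 < P₂)
    (hc0 : 0 < c) (hc1 : c < 1) :
    {R : ℝ × ℝ | 0 ≤ R.1 ∧ 0 ≤ R.2 ∧
      (R.1, max ((1/c) * R.2 - (1/c - 1) * gam P₂) 0) ∈ C1 P₁ P₂} =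
    {R : ℝ × ℝ | 0 ≤ R.1 ∧ R.1 ≤ gam P₁ ∧ 0 ≤ R.2 ∧ R.2 ≤ gam P₂ ∧
      R.1 + (1/c) * R.2 ≤ (1/c - 1) * gam P₂ + gam (P₁ + P₂)} := by
  have ha : (1:ℝ) < 1/c := (one_lt_div hc0).mpr hc1
  have hg2 : 0 ≤ gam P₂ := by
    have : (0:ℝ) ≤ Real.logb 2 (1 + P₂) :=
      Real.logb_nonneg (by norm_num) (by linarith)
    unfold gam; linarith
  have h112 : gam P₁ ≤ gam (P₁ + P₂) := by
    unfold gam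
    have : Real.logb 2 (1 + P₁) ≤ Real.logb 2 (1 + (P₁ + P₂)) := by
      gcongr
      · norm_num
      · linarith
    linarith
  ext ⟨R₁, R₂⟩
  simp only [C1, Set.mem_setOf_eq]
  constructor
  · rintro ⟨h1, h2, _, h4, _, h6, h7⟩
    rcases le_or_gt ((1/c) * R₂ - (1/c - 1) * gam P₂) 0 with h0 | h0
    · rw [max_eq_right h0] at h6 h7
      refine ⟨h1, h4, h2, ?_, ?_⟩
      · nlinarith
      · linarith
    · rw [max_eq_left h0.le] at h6 h7
      refine ⟨h1, h4, h2, ?_, ?_⟩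
      · nlinarith
      · linarith
  · rintro ⟨h1, h2, h3, h4, h5⟩
    refine ⟨h1, h3, h1, h2, le_max_right _ _, ?_, ?_⟩
    · rcases le_or_gt ((1/c) * R₂ - (1/c - 1) * gam P₂) 0 with h0 | h0
      · rw [max_eq_right h0]; exact hg2
      · rw [max_eq_left h0.le]; nlinarith
    · rcases le_or_gt ((1/c) * R₂ - (1/c - 1) * gam P₂) 0 with h0 | h0
      · rw [max_eq_right h0]; linarith
      · rw [max_eq_left h0.le]; linarith
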